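/- arXiv:1204.1687 — 2 statements merged into one kernel-verified Lean document; each statement's English description precedes it below -/
import Mathlib

section
/- Let d ≥ 1, let β' = (β'_{ij})_{i+j ≤ 2d+2} be a real multisequence, let M_{d+1} = M_{d+1}(β'), let M_d be the compression of M_{d+1} to rows and columns indexed by monomials of degree ≤ d, and let B(d+1) be the block of M_{d+1} with rows of degree ≤ d and columns of degree d+1. If the column space of B(d+1) is contained in the column space of M_d, then for every polynomial p ∈ ℝ[x,y] of degree ≤ d with p(X,Y) = 0 in the columns of M_d, the relation p(X,Y) = 0 also holds in the (full) columns of M_{d+1}. -/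
open Finset Matrix

noncomputable section

/-- Monomial indices of degree at most `d` (the monomial `x^i y^j` is the pair `(i,j)`). -/
abbrev Idx (d : ℕ) : Type := {ij : ℕ × ℕ // ij.1 + ij.2 ≤ d}

/-- Monomial indices of degree exactly `e`. -/
abbrev Jdx (e : ℕ) : Type := {ij : ℕ × ℕ // ij.1 + ij.2 = e}

instance (d : ℕ) : Fintype (Idx d) :=
  Fintype.subtype
    ((Finset.range (d + 1) ×ˢ Finset.range (d + 1)).filter fun ij => ij.1 + ij.2 ≤ d)
    (by
      rintro ⟨a, b⟩
      simp only [Finset.mem_filter, Finset.mem_product, Finset.mem_range]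
      omega)

instance (e : ℕ) : Fintype (Jdx e) :=
  Fintype.subtype
    ((Finset.range (e + 1) ×ˢ Finset.range (e + 1)).filter fun ij => ij.1 + ij.2 = e)
    (by
      rintro ⟨a, b⟩
      simp only [Finset.mem_filter, Finset.mem_product, Finset.mem_range]
      omega)

/-- The moment matrix `M_d(β)`: rows and columns are indexed by monomials of degree ≤ d,
with entry in row `(i,j)`, column `(k,l)` equal to `β (i+k) (j+l)`. -/
def momentMatrix (d : ℕ) (β : ℕ → ℕ → ℝ) : Matrix (Idx d) (Idx d) ℝ :=
  Matrix.of fun r c => β (r.1.1 + c.1.1) (r.1.2 + c.1.2)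

/-- The coefficient vector (truncated to degree ≤ d) of the polynomial with
coefficient function `a`. -/
def coeffVec (d : ℕ) (a : ℕ → ℕ → ℝ) : Idx d → ℝ := fun c => a c.1.1 c.1.2

/-- `p(X,Y)`: the linear combination of the columns of `M_d(β)` given by the
coefficient function `a` of `p`. -/
def polyCol (d : ℕ) (β : ℕ → ℕ → ℝ) (a : ℕ → ℕ → ℝ) : Idx d → ℝ :=
  momentMatrix d β *ᵥ coeffVec d a

/-- Coefficient function of the monomial `x^u y^v`. -/
def monoC (u v : ℕ) : ℕ → ℕ → ℝ := fun k l => if k = u ∧ l = v then 1 else 0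

/-- Coefficient function of `x^u y^v * p`, where `p` has coefficient function `a`. -/
def shiftC (u v : ℕ) (a : ℕ → ℕ → ℝ) : ℕ → ℕ → ℝ :=
  fun k l => if u ≤ k ∧ v ≤ l then a (k - u) (l - v) else 0

/-- The polynomial with coefficient function `a` has (total) degree at most `D`. -/
def DegLE (a : ℕ → ℕ → ℝ) (D : ℕ) : Prop := ∀ k l : ℕ, D < k + l → a k l = 0

/-- Coefficient function of the product of two polynomials. -/
def cMul (a b : ℕ → ℕ → ℝ) : ℕ → ℕ → ℝ := fun k l =>
  ∑ i ∈ Finset.range (k + 1), ∑ j ∈ Finset.range (l + 1), a i j * b (k - i) (l - j)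

/-- `M_d(β)` is recursively generated: whenever `p, q, pq` all have degree ≤ d and
`p(X,Y) = 0`, also `(pq)(X,Y) = 0`. -/
def RecursivelyGenerated (d : ℕ) (β : ℕ → ℕ → ℝ) : Prop :=
  ∀ a b : ℕ → ℕ → ℝ, DegLE a d → DegLE b d → DegLE (cMul a b) d →
    polyCol d β a = 0 → polyCol d β (cMul a b) = 0

lemma sum_idx (d : ℕ) (f : ℕ × ℕ → ℝ) :
    ∑ c : Idx d, f c.1 =
      ∑ p ∈ (Finset.range (d+1) ×ˢ Finset.range (d+1)).filter (fun ij => ij.1 + ij.2 ≤ d),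
        f p := by
  refine (Finset.sum_subtype _ ?_ f).symm
  rintro ⟨a, b⟩
  simp only [Finset.mem_filter, Finset.mem_product, Finset.mem_range]
  omega

lemma sum_idx_succ (d : ℕ) (f : ℕ × ℕ → ℝ)
    (hf : ∀ p : ℕ × ℕ, p.1 + p.2 = d + 1 → f p = 0) :
    ∑ c : Idx (d+1), f c.1 = ∑ c : Idx d, f c.1 := by
  rw [sum_idx, sum_idx]
  symm
  apply Finset.sum_subset
  · intro p hp
    simp only [Finset.mem_filter, Finset.mem_product, Finset.mem_range] at hp ⊢
    omega
  · intro p hp hnp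
    simp only [Finset.mem_filter, Finset.mem_product, Finset.mem_range] at hp hnp
    exact hf p (by omega)

/-- If the column space of the block `B(d+1)` of `M_{d+1}(β')` is
contained in the column space of its compression `M_d`, then every column relation
`p(X,Y) = 0` of `M_d` (with `deg p ≤ d`) also holds in the full columns of
`M_{d+1}(β')`. -/
theorem statement17 (d : ℕ) (hd : 1 ≤ d) (β' : ℕ → ℕ → ℝ)
    (hran : ∀ c : Jdx (d + 1), ∃ v : Idx d → ℝ,
      (fun r : Idx d => β' (r.1.1 + c.1.1) (r.1.2 + c.1.2)) = momentMatrix d β' *ᵥ v) :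
    ∀ a : ℕ → ℕ → ℝ, DegLE a d →
      polyCol d β' a = 0 → polyCol (d + 1) β' a = 0 := by
  intro a ha h0
  funext r
  have key : ∀ s : Idx d,
      ∑ c : Idx d, β' (s.1.1 + c.1.1) (s.1.2 + c.1.2) * a c.1.1 c.1.2 = 0 := by
    intro s
    have := congrFun h0 s
    simpa [polyCol, momentMatrix, Matrix.mulVec, dotProduct, coeffVec] using this
  have step1 : polyCol (d+1) β' a r
      = ∑ c : Idx d, β' (r.1.1 + c.1.1) (r.1.2 + c.1.2) * a c.1.1 c.1.2 := by
    have e1 : polyCol (d+1) β' a r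
        = ∑ c : Idx (d+1), (fun p : ℕ × ℕ =>
            β' (r.1.1 + p.1) (r.1.2 + p.2) * a p.1 p.2) c.1 := by
      simp [polyCol, momentMatrix, Matrix.mulVec, dotProduct, coeffVec]
    rw [e1]
    refine sum_idx_succ d (fun p : ℕ × ℕ => β' (r.1.1 + p.1) (r.1.2 + p.2) * a p.1 p.2) fun p hp => ?_
    simp [ha p.1 p.2 (by omega)]
  have hr := r.2
  show polyCol (d+1) β' a r = 0
  rcases le_or_gt (r.1.1 + r.1.2) d with hle | hlt
  · rw [step1]
    exact key ⟨r.1, hle⟩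
  · obtain ⟨v, hv⟩ := hran ⟨r.1, by omega⟩
    have hcol : ∀ c : Idx d, β' (r.1.1 + c.1.1) (r.1.2 + c.1.2)
        = ∑ s : Idx d, β' (c.1.1 + s.1.1) (c.1.2 + s.1.2) * v s := by
      intro c
      have h := congrFun hv c
      simp only [momentMatrix, Matrix.mulVec, dotProduct, Matrix.of_apply] at h
      rw [add_comm r.1.1 c.1.1, add_comm r.1.2 c.1.2]
      exact h
    rw [step1]
    calc ∑ c : Idx d, β' (r.1.1 + c.1.1) (r.1.2 + c.1.2) * a c.1.1 c.1.2
        = ∑ c : Idx d, ∑ s : Idx d,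
            v s * (β' (s.1.1 + c.1.1) (s.1.2 + c.1.2) * a c.1.1 c.1.2) := by
          refine Finset.sum_congr rfl fun c _ => ?_
          rw [hcol c, Finset.sum_mul]
          refine Finset.sum_congr rfl fun s _ => ?_
          rw [add_comm c.1.1 s.1.1, add_comm c.1.2 s.1.2]
          ring
      _ = ∑ s : Idx d, v s *
            ∑ c : Idx d, β' (s.1.1 + c.1.1) (s.1.2 + c.1.2) * a c.1.1 c.1.2 := by
          rw [Finset.sum_comm]
          simp only [Finset.mul_sum]
      _ = 0 := by
          apply Finset.sum_eq_zero
          intro s _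
          rw [key s, mul_zero]
end
end

section
/- Suppose M_d(β) is positive semidefinite and recursively generated, the column relations X^{n+i}Y^j = (x^i y^j p)(X,Y) hold for all i,j ≥ 0 with n+i+j ≤ d and the column relations X^kY^{m+l} = (x^k y^l q)(X,Y) hold for all k,l ≥ 0 with m+k+l ≤ d, where 1 ≤ n, m ≤ d, p has degree ≤ n−1, and q has degree ≤ m with no y^m monomial. If n ≤ d − m + 1 (equivalently n + m ≤ d + 1), then M_d(β) is flat: rank M_d(β) = rank M_{d−1}(β), i.e., every column of M_d indexed by a monomial of degree d lies in the span of the columns indexed by monomials of degree ≤ d − 1. -/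
open Finset Matrix

noncomputable section

lemma polyCol_eq_sum (d : ℕ) (β a : ℕ → ℕ → ℝ) :
    polyCol d β a = ∑ c : Idx d, a c.1.1 c.1.2 • (fun r => momentMatrix d β r c) := by
  funext r
  simp only [polyCol, Matrix.mulVec, dotProduct, coeffVec, Finset.sum_apply, Pi.smul_apply,
    smul_eq_mul]
  exact Finset.sum_congr rfl fun c _ => mul_comm _ _

lemma coeffVec_mono (d u v : ℕ) (h : u + v ≤ d) :
    coeffVec d (monoC u v) = Pi.single (⟨(u, v), h⟩ : Idx d) 1 := by
  funext c
  simp only [coeffVec, monoC, Pi.single_apply]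
  by_cases hc : c = ⟨(u, v), h⟩
  · subst hc; simp
  · have : ¬(c.1.1 = u ∧ c.1.2 = v) := by
      rintro ⟨h1, h2⟩
      exact hc (Subtype.ext (Prod.ext h1 h2))
    simp [this, hc]

lemma polyCol_mono (d u v : ℕ) (β : ℕ → ℕ → ℝ) (h : u + v ≤ d) :
    polyCol d β (monoC u v) = fun r => momentMatrix d β r ⟨(u, v), h⟩ := by
  rw [polyCol, coeffVec_mono d u v h, Matrix.mulVec_single]
  funext r; simp

lemma shiftC_mono (u v n' m' : ℕ) : shiftC u v (monoC n' m') = monoC (n' + u) (m' + v) := by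
  funext k l
  simp only [shiftC, monoC]
  split_ifs <;> first | rfl | (exfalso; omega)

lemma shiftC_sub (u v : ℕ) (a b : ℕ → ℕ → ℝ) :
    shiftC u v (a - b) = shiftC u v a - shiftC u v b := by
  funext k l
  simp only [shiftC, Pi.sub_apply]
  split_ifs <;> simp

lemma polyCol_sub (d : ℕ) (β a b : ℕ → ℕ → ℝ) :
    polyCol d β (a - b) = polyCol d β a - polyCol d β b := by
  have : coeffVec d (a - b) = coeffVec d a - coeffVec d b := rfl
  rw [polyCol, this, Matrix.mulVec_sub]; rfl

/-- If `M_d(β)` is positive semidefinite and recursively generated,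
the recursive column relations coming from `X^n = p(X,Y)` and `Y^m = q(X,Y)` hold, and
`n + m ≤ d + 1`, then `M_d(β)` is flat: `rank M_d = rank M_{d-1}`, i.e. every column of
degree `d` lies in the span of the columns of degree ≤ d-1. -/
theorem statement19 (d n m : ℕ) (hd : 1 ≤ d)
    (hn1 : 1 ≤ n) (hnd : n ≤ d) (hm1 : 1 ≤ m) (hmd : m ≤ d)
    (β p q : ℕ → ℕ → ℝ)
    (hpsd : (momentMatrix d β).PosSemidef)
    (hrg : RecursivelyGenerated d β)
    (hp : DegLE p (n - 1)) (hq : DegLE q m) (hqm : q 0 m = 0)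
    (hX : ∀ i j : ℕ, n + i + j ≤ d → polyCol d β (shiftC i j (monoC n 0 - p)) = 0)
    (hY : ∀ k l : ℕ, m + k + l ≤ d → polyCol d β (shiftC k l (monoC 0 m - q)) = 0)
    (hnm : n + m ≤ d + 1) :
    (momentMatrix d β).rank = (momentMatrix (d - 1) β).rank ∧
    ∀ c : Idx d, c.1.1 + c.1.2 = d →
      (fun r : Idx d => momentMatrix d β r c) ∈
        Submodule.span ℝ
          {w : Idx d → ℝ | ∃ c' : Idx d, c'.1.1 + c'.1.2 ≤ d - 1 ∧
            w = fun r : Idx d => momentMatrix d β r c'} := by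

  set gen : Set (Idx d → ℝ) :=
    {w : Idx d → ℝ | ∃ c' : Idx d, c'.1.1 + c'.1.2 ≤ d - 1 ∧
      w = fun r : Idx d => momentMatrix d β r c'} with hgen
  set S := Submodule.span ℝ gen with hS
  have hlow : ∀ a : ℕ → ℕ → ℝ, (∀ k l : ℕ, k + l ≤ d → a k l ≠ 0 → k + l ≤ d - 1) →
      polyCol d β a ∈ S := by
    intro a ha
    rw [polyCol_eq_sum]
    refine Submodule.sum_mem _ fun c _ => ?_
    by_cases h0 : a c.1.1 c.1.2 = 0
    · rw [h0, zero_smul]; exact Submodule.zero_mem _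
    · exact Submodule.smul_mem _ _ (Submodule.subset_span ⟨c, ha _ _ c.2 h0, rfl⟩)
  have key : ∀ t : ℕ, ∀ c : Idx d, c.1.1 + c.1.2 = d → n ≤ c.1.1 + t →
      (fun r => momentMatrix d β r c) ∈ S := by
    intro t
    induction t with
    | zero =>
      intro c hcd hcn
      obtain ⟨⟨c1, c2⟩, hc⟩ := c
      simp only at hcd hcn ⊢
      have hij : n + (c1 - n) + c2 ≤ d := by omega
      have hrel := hX (c1 - n) c2 hij
      rw [shiftC_sub, polyCol_sub, sub_eq_zero, shiftC_mono,
        show n + (c1 - n) = c1 from by omega, Nat.zero_add] at hrel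
      rw [← polyCol_mono d c1 c2 β hc, hrel]
      refine hlow _ fun k l hkl hne => ?_
      simp only [shiftC] at hne
      by_cases hb : c1 - n ≤ k ∧ c2 ≤ l
      · rw [if_pos hb] at hne
        by_contra hcon
        exact hne (hp _ _ (by omega))
      · rw [if_neg hb] at hne; exact absurd rfl hne
    | succ t ih =>
      intro c hcd hcn
      by_cases hle : n ≤ c.1.1 + t
      · exact ih c hcd hle
      obtain ⟨⟨c1, c2⟩, hc⟩ := c
      simp only at hcd hcn hle ⊢
      have hkl : m + c1 + (c2 - m) ≤ d := by omega
      have hrel := hY c1 (c2 - m) hkl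
      rw [shiftC_sub, polyCol_sub, sub_eq_zero, shiftC_mono, Nat.zero_add,
        show m + (c2 - m) = c2 from by omega] at hrel
      rw [← polyCol_mono d c1 c2 β hc, hrel, polyCol_eq_sum]
      refine Submodule.sum_mem _ fun c' _ => ?_
      by_cases h0 : shiftC c1 (c2 - m) q c'.1.1 c'.1.2 = 0
      · rw [h0, zero_smul]; exact Submodule.zero_mem _
      refine Submodule.smul_mem _ _ ?_
      simp only [shiftC] at h0
      by_cases hb : c1 ≤ c'.1.1 ∧ c2 - m ≤ c'.1.2
      swap
      · rw [if_neg hb] at h0; exact absurd rfl h0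
      rw [if_pos hb] at h0
      have hdeg : (c'.1.1 - c1) + (c'.1.2 - (c2 - m)) ≤ m := by
        by_contra hcon
        exact h0 (hq _ _ (by omega))
      by_cases hlowdeg : c'.1.1 + c'.1.2 ≤ d - 1
      · exact Submodule.subset_span ⟨c', hlowdeg, rfl⟩
      · have hdeq : c'.1.1 + c'.1.2 = d := by have := c'.2; omega
        have hgt : c1 + 1 ≤ c'.1.1 := by
          by_contra hcon
          rw [show c'.1.1 - c1 = 0 from by omega,
            show c'.1.2 - (c2 - m) = m from by omega] at h0
          exact h0 hqm
        exact ih c' hdeq (by omega)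
  constructor
  · have hcols : ∀ c : Idx d, (fun r => momentMatrix d β r c) ∈ S := by
      intro c
      by_cases hcd : c.1.1 + c.1.2 ≤ d - 1
      · exact Submodule.subset_span ⟨c, hcd, rfl⟩
      · exact key n c (by have := c.2; omega) (by omega)
    have hspan : Submodule.span ℝ (Set.range (momentMatrix d β)ᵀ) = S := by
      refine le_antisymm (Submodule.span_le.2 ?_) (Submodule.span_le.2 ?_)
      · rintro w ⟨c, rfl⟩
        exact hcols c
      · rintro w ⟨c', _, rfl⟩
        exact Submodule.subset_span ⟨c', rfl⟩
    set ι : Idx (d - 1) → Idx d := fun c => ⟨c.1, le_trans c.2 (Nat.sub_le d 1)⟩ with hι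
    set T : (Idx d → ℝ) →ₗ[ℝ] (Idx (d - 1) → ℝ) := LinearMap.funLeft ℝ ℝ ι with hT
    have hrep : ∀ w ∈ S, ∃ v : Idx d → ℝ,
        (∀ c : Idx d, ¬ c.1.1 + c.1.2 ≤ d - 1 → v c = 0) ∧ w = momentMatrix d β *ᵥ v := by
      intro w hw
      induction hw using Submodule.span_induction with
      | mem w hw =>
        obtain ⟨c', hc', rfl⟩ := hw
        refine ⟨Pi.single c' 1, ?_, ?_⟩
        · intro c hcd
          rcases eq_or_ne c c' with rfl | hne
          · exact absurd hc' hcd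
          · simp [Pi.single_apply, hne]
        · rw [Matrix.mulVec_single]; funext r; simp
      | zero => exact ⟨0, fun _ _ => rfl, by rw [Matrix.mulVec_zero]⟩
      | add x y hx hy hxv hyv =>
        obtain ⟨v1, hv1, rfl⟩ := hxv
        obtain ⟨v2, hv2, rfl⟩ := hyv
        exact ⟨v1 + v2, fun c hc => by simp [hv1 c hc, hv2 c hc],
          (Matrix.mulVec_add _ _ _).symm⟩
      | smul r x hx hxv =>
        obtain ⟨v, hv, rfl⟩ := hxv
        exact ⟨r • v, fun c hc => by simp [hv c hc], (Matrix.mulVec_smul _ _ _).symm⟩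
    have hker : LinearMap.ker (T.domRestrict S) = ⊥ := by
      rw [LinearMap.ker_eq_bot']
      rintro ⟨w, hw⟩ hTw
      obtain ⟨v, hv, hwv⟩ := hrep w hw
      have hTw' : T w = 0 := hTw
      have hdot : v ⬝ᵥ (momentMatrix d β *ᵥ v) = 0 := by
        apply Finset.sum_eq_zero
        intro c _
        by_cases hcd : c.1.1 + c.1.2 ≤ d - 1
        · have h1 : w (ι ⟨c.1, hcd⟩) = 0 := congrFun hTw' ⟨c.1, hcd⟩
          have hic : ι (⟨c.1, hcd⟩ : Idx (d - 1)) = c := rfl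
          rw [hic] at h1
          rw [← hwv, h1, mul_zero]
        · rw [hv c hcd, zero_mul]
      have hz : momentMatrix d β *ᵥ v = 0 :=
        (hpsd.dotProduct_mulVec_zero_iff v).1 (by simpa using hdot)
      exact Subtype.ext (hwv.trans hz)
    have hmap : S.map T = Submodule.span ℝ (Set.range (momentMatrix (d - 1) β)ᵀ) := by
      rw [hS, Submodule.map_span]
      congr 1
      ext w
      constructor
      · rintro ⟨w', ⟨c', hc', rfl⟩, rfl⟩
        exact ⟨⟨c'.1, hc'⟩, rfl⟩
      · rintro ⟨c'', rfl⟩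
        exact ⟨fun r => momentMatrix d β r (ι c''), ⟨ι c'', c''.2, rfl⟩, rfl⟩
    have hrk1 : (momentMatrix d β).rank = Module.finrank ℝ S := by
      rw [Matrix.rank_eq_finrank_span_cols, Matrix.col_def, hspan]
    have hrk2 : (momentMatrix (d - 1) β).rank = Module.finrank ℝ (S.map T) := by
      rw [Matrix.rank_eq_finrank_span_cols, Matrix.col_def, hmap]
    have hrn := LinearMap.finrank_range_add_finrank_ker (T.domRestrict S)
    rw [hker, finrank_bot, add_zero, LinearMap.range_domRestrict] at hrn
    rw [hrk1, hrk2, hrn]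
  · intro c hc
    exact key n c hc (by omega)
end
end
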